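/- Let k be a perfect field of prime characteristic p, S = k[[x_1,…,x_n]], q = p^e with e ≥ 1, and z = (x_1·x_2⋯x_n)^{q−1}. Then a prime ideal P of S satisfies z·P ⊆ P^{[q]} if and only if P is generated by a (possibly empty) subset of the variables, i.e., P = (x_i : i ∈ A) for some A ⊆ {1,…,n}. (Equivalently: the Φ-compatible prime ideals of S, for the map Φ given by premultiplication by z composed with the trace map, are exactly the ideals generated by variables.) -/

import Mathlib

/-- The `q`-th Frobenius power `I^{[q]}` of an ideal `I`: the ideal generated by the
`q`-th powers of the elements of `I`. -/
def frobeniusPower {R : Type*} [CommRing R] (I : Ideal R) (q : ℕ) : Ideal R :=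
  Ideal.span ((fun a => a ^ q) '' (I : Set R))

open MvPowerSeries

namespace Stmt17

set_option linter.unusedSectionVars false

variable {k : Type*} [Field k] (p : ℕ) [Fact p.Prime] [CharP k p] {n : ℕ}

theorem charP_mvps : CharP (MvPowerSeries (Fin n) k) p :=
  charP_of_injective_ringHom (f := MvPowerSeries.C (σ := Fin n) (R := k))
    (fun a b hab => by
      have := congrArg (MvPowerSeries.constantCoeff (σ := Fin n) (R := k)) hab
      simpa using this) p

theorem charP_mvpoly : CharP (MvPolynomial (Fin n) k) p :=
  charP_of_injective_ringHom (MvPolynomial.C_injective (Fin n) k) p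

theorem mv_expand_char (φ : MvPolynomial (Fin n) k) :
    MvPolynomial.expand p (MvPolynomial.map (frobenius k p) φ) = φ ^ p := by
  haveI := charP_mvpoly (k := k) p (n := n)
  induction φ using MvPolynomial.induction_on with
  | C a => rw [MvPolynomial.map_C, MvPolynomial.expand_C, frobenius_def, MvPolynomial.C_pow]
  | add f g hf hg => simp [add_pow_char, hf, hg]
  | mul_X f i hf => simp [mul_pow, hf]

theorem expand_monomial' (q : ℕ) (hq : q ≠ 0) (d : Fin n →₀ ℕ) (r : k) :
    MvPolynomial.expand q (MvPolynomial.monomial d r) = MvPolynomial.monomial (q • d) r := by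
  rw [MvPolynomial.monomial_eq, MvPolynomial.monomial_eq, map_mul, MvPolynomial.expand_C]
  congr 1
  rw [Finsupp.prod, Finsupp.prod, Finsupp.support_smul_eq hq, map_prod]
  refine Finset.prod_congr rfl fun i _ => ?_
  rw [map_pow, MvPolynomial.expand_X, ← pow_mul, Finsupp.smul_apply, smul_eq_mul, mul_comm]

theorem coeff_expand_smul (q : ℕ) (hq : q ≠ 0) (ψ : MvPolynomial (Fin n) k) (m : Fin n →₀ ℕ) :
    (MvPolynomial.expand q ψ).coeff (q • m) = ψ.coeff m := by
  induction ψ using MvPolynomial.induction_on' with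
  | monomial d r =>
    rw [expand_monomial' q hq, MvPolynomial.coeff_monomial, MvPolynomial.coeff_monomial]
    by_cases h : d = m
    · simp [h]
    · rw [if_neg, if_neg h]
      intro hc
      refine h (Finsupp.ext fun i => ?_)
      have := congrArg (fun v => v i) hc
      simp only [Finsupp.smul_apply, smul_eq_mul] at this
      exact Nat.eq_of_mul_eq_mul_left (Nat.pos_of_ne_zero hq) this
  | add f g hf hg => simp [map_add, hf, hg]

theorem coeff_expand_ne (q : ℕ) (hq : q ≠ 0) (ψ : MvPolynomial (Fin n) k) (m : Fin n →₀ ℕ)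
    (hm : ¬ ∃ m', m = q • m') : (MvPolynomial.expand q ψ).coeff m = 0 := by
  induction ψ using MvPolynomial.induction_on' with
  | monomial d r =>
    rw [expand_monomial' q hq, MvPolynomial.coeff_monomial, if_neg]
    intro hc; exact hm ⟨d, hc.symm⟩
  | add f g hf hg => simp [map_add, hf, hg]

end Stmt17

namespace Stmt17

variable {k : Type*} [Field k] (p : ℕ) [Fact p.Prime] [CharP k p] {n : ℕ}

theorem coeff_mul_congr {f g f' g' : MvPowerSeries (Fin n) k} {m : Fin n →₀ ℕ}
    (hf : ∀ u ≤ m, MvPowerSeries.coeff u f = MvPowerSeries.coeff u f')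
    (hg : ∀ u ≤ m, MvPowerSeries.coeff u g = MvPowerSeries.coeff u g') :
    ∀ u ≤ m, MvPowerSeries.coeff u (f * g) = MvPowerSeries.coeff u (f' * g') := by
  intro u hu
  classical
  rw [MvPowerSeries.coeff_mul, MvPowerSeries.coeff_mul]
  refine Finset.sum_congr rfl fun x hx => ?_
  rw [Finset.HasAntidiagonal.mem_antidiagonal] at hx
  have h1 : x.1 ≤ m := le_trans (hx ▸ le_add_of_nonneg_right zero_le) hu
  have h2 : x.2 ≤ m := le_trans (hx ▸ le_add_of_nonneg_left zero_le) hu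
  rw [hf _ h1, hg _ h2]

theorem coeff_pow_congr {f g : MvPowerSeries (Fin n) k} {m : Fin n →₀ ℕ}
    (hf : ∀ u ≤ m, MvPowerSeries.coeff u f = MvPowerSeries.coeff u g) (j : ℕ) :
    ∀ u ≤ m, MvPowerSeries.coeff u (f ^ j) = MvPowerSeries.coeff u (g ^ j) := by
  induction j with
  | zero => simp
  | succ j ih =>
    intro u hu
    rw [pow_succ, pow_succ]
    exact coeff_mul_congr ih hf u hu

/-- all-ones finsupp -/
noncomputable def ones (n : ℕ) : Fin n →₀ ℕ := Finsupp.equivFunOnFinite.symm fun _ => 1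

@[simp] theorem ones_apply {n : ℕ} (i : Fin n) : ones n i = 1 := rfl

theorem lt_add_ones {n : ℕ} (hn : 0 < n) {u m : Fin n →₀ ℕ} (hu : u ≤ m) :
    u < m + ones n := by
  refine lt_of_le_of_lt hu ?_
  refine lt_add_of_pos_right m ?_
  rw [pos_iff_ne_zero]
  intro h
  have := congrArg (fun v => v ⟨0, hn⟩) h
  simp at this

theorem coeff_pow_p (f : MvPowerSeries (Fin n) k) (m : Fin n →₀ ℕ) :
    MvPowerSeries.coeff (p • m) (f ^ p) = (MvPowerSeries.coeff m f) ^ p := by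
  rcases Nat.eq_zero_or_pos n with hn | hn
  · subst hn
    have hm : m = 0 := Subsingleton.elim _ _
    have hpm : p • m = 0 := Subsingleton.elim _ _
    rw [hpm, hm]
    simp only [MvPowerSeries.coeff_zero_eq_constantCoeff]
    exact map_pow (MvPowerSeries.constantCoeff (σ := Fin 0) (R := k)) f p
  · set N := p • m + ones n with hN
    set φ := MvPowerSeries.trunc k N f with hφ
    have hagree : ∀ u ≤ p • m, MvPowerSeries.coeff u f
        = MvPowerSeries.coeff u (φ : MvPowerSeries (Fin n) k) := by
      intro u hu
      rw [MvPolynomial.coeff_coe, MvPowerSeries.coeff_trunc, if_pos (lt_add_ones hn hu)]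
    have hp1 : p • m ≤ p • m := le_refl _
    rw [coeff_pow_congr hagree p _ hp1, ← MvPolynomial.coe_pow, MvPolynomial.coeff_coe,
      ← mv_expand_char p φ, coeff_expand_smul p (Fact.out (p := p.Prime)).ne_zero,
      MvPolynomial.coeff_map, ← MvPolynomial.coeff_coe, ← hagree m ?_]
    · rfl
    · intro i
      calc m i ≤ p * m i := Nat.le_mul_of_pos_left _ (Fact.out (p := p.Prime)).pos
      _ = (p • m) i := by simp

theorem coeff_pow_p_ne (f : MvPowerSeries (Fin n) k) (m : Fin n →₀ ℕ)
    (hm : ¬ ∃ m', m = p • m') : MvPowerSeries.coeff m (f ^ p) = 0 := by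
  rcases Nat.eq_zero_or_pos n with hn | hn
  · subst hn
    exact absurd ⟨0, Subsingleton.elim _ _⟩ hm
  · set N := m + ones n with hN
    set φ := MvPowerSeries.trunc k N f with hφ
    have hagree : ∀ u ≤ m, MvPowerSeries.coeff u f
        = MvPowerSeries.coeff u (φ : MvPowerSeries (Fin n) k) := by
      intro u hu
      rw [MvPolynomial.coeff_coe, MvPowerSeries.coeff_trunc, if_pos (lt_add_ones hn hu)]
    rw [coeff_pow_congr hagree p _ (le_refl m), ← MvPolynomial.coe_pow, MvPolynomial.coeff_coe,
      ← mv_expand_char p φ, coeff_expand_ne p (Fact.out (p := p.Prime)).ne_zero _ _ hm]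

theorem coeff_pow_q (e : ℕ) (f : MvPowerSeries (Fin n) k) (m : Fin n →₀ ℕ) :
    MvPowerSeries.coeff ((p ^ e) • m) (f ^ (p ^ e)) = (MvPowerSeries.coeff m f) ^ (p ^ e) := by
  induction e generalizing m with
  | zero => simp
  | succ e ih =>
    have h1 : p ^ (e + 1) • m = p • ((p ^ e) • m) := by rw [← mul_smul, pow_succ, mul_comm]
    have h2 : f ^ (p ^ (e + 1)) = (f ^ (p ^ e)) ^ p := by rw [← pow_mul, pow_succ]
    rw [h1, h2, coeff_pow_p, ih, ← pow_mul, pow_succ]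

theorem coeff_pow_q_ne (e : ℕ) (f : MvPowerSeries (Fin n) k) (m : Fin n →₀ ℕ)
    (hm : ¬ ∃ m', m = (p ^ e) • m') : MvPowerSeries.coeff m (f ^ (p ^ e)) = 0 := by
  induction e generalizing m with
  | zero => exact absurd ⟨m, by simp⟩ hm
  | succ e ih =>
    have h2 : f ^ (p ^ (e + 1)) = (f ^ (p ^ e)) ^ p := by rw [← pow_mul, pow_succ]
    rw [h2]
    by_cases hp : ∃ m', m = p • m'
    · obtain ⟨m', rfl⟩ := hp
      rw [coeff_pow_p, ih m' ?_, zero_pow (Fact.out (p := p.Prime)).ne_zero]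
      intro ⟨m'', hm''⟩
      exact hm ⟨m'', by rw [hm'', ← mul_smul, pow_succ, mul_comm]⟩
    · exact coeff_pow_p_ne p _ _ hp

end Stmt17

namespace Stmt17

variable {k : Type*} [Field k] (p : ℕ) [Fact p.Prime] [CharP k p] [PerfectRing k p] {n : ℕ}

/-- `p^e`-th root in a perfect field -/
noncomputable def rt (e : ℕ) : k ≃+* k := (iterateFrobeniusEquiv k p e).symm

theorem rt_pow (e : ℕ) (a : k) : (rt p e a) ^ p ^ e = a := by
  have := (iterateFrobeniusEquiv k p e).apply_symm_apply a
  rwa [iterateFrobeniusEquiv_def] at this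

theorem rt_pow' (e : ℕ) (a : k) : rt p e (a ^ p ^ e) = a := by
  have := (iterateFrobeniusEquiv k p e).symm_apply_apply a
  rwa [iterateFrobeniusEquiv_def] at this

theorem rt_eq_zero_iff (e : ℕ) {a : k} : rt p e a = 0 ↔ a = 0 := by
  constructor
  · intro h
    rw [← rt_pow p e a, h, zero_pow]
    exact pow_ne_zero e (Fact.out (p := p.Prime)).ne_zero
  · rintro rfl; exact map_zero _

/-- The Cartier-type operator: `coeff m (Cb e b f) = (coeff (p^e•m+b) f)^(1/p^e)`. -/
noncomputable def Cb (e : ℕ) (b : Fin n →₀ ℕ) (f : MvPowerSeries (Fin n) k) :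
    MvPowerSeries (Fin n) k :=
  fun m => rt p e (MvPowerSeries.coeff (p ^ e • m + b) f)

theorem coeff_Cb (e : ℕ) (b m : Fin n →₀ ℕ) (f : MvPowerSeries (Fin n) k) :
    MvPowerSeries.coeff m (Cb p e b f) = rt p e (MvPowerSeries.coeff (p ^ e • m + b) f) := rfl

theorem Cb_zero (e : ℕ) (b : Fin n →₀ ℕ) : Cb p e b (0 : MvPowerSeries (Fin n) k) = 0 := by
  ext m
  simp [coeff_Cb]

theorem Cb_add (e : ℕ) (b : Fin n →₀ ℕ) (f g : MvPowerSeries (Fin n) k) :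
    Cb p e b (f + g) = Cb p e b f + Cb p e b g := by
  ext m
  simp [coeff_Cb]

/-- the box of exponents `< q` in every coordinate -/
noncomputable def box (q : ℕ) (n : ℕ) : Finset (Fin n →₀ ℕ) := Finset.Iic ((q - 1) • ones n)

theorem mem_box {q n : ℕ} (hq : 0 < q) {b : Fin n →₀ ℕ} :
    b ∈ box q n ↔ ∀ i, b i < q := by
  rw [box, Finset.mem_Iic, Finsupp.le_def]
  apply forall_congr'
  intro i
  rw [Finsupp.smul_apply, ones_apply, smul_eq_mul, mul_one]
  omega

noncomputable def divq (q : ℕ) (m : Fin n →₀ ℕ) : Fin n →₀ ℕ :=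
  Finsupp.equivFunOnFinite.symm fun i => m i / q

noncomputable def modq (q : ℕ) (m : Fin n →₀ ℕ) : Fin n →₀ ℕ :=
  Finsupp.equivFunOnFinite.symm fun i => m i % q

@[simp] theorem divq_apply (q : ℕ) (m : Fin n →₀ ℕ) (i : Fin n) : divq q m i = m i / q := rfl
@[simp] theorem modq_apply (q : ℕ) (m : Fin n →₀ ℕ) (i : Fin n) : modq q m i = m i % q := rfl

theorem modq_mem_box {q : ℕ} (hq : 0 < q) (m : Fin n →₀ ℕ) : modq q m ∈ box q n :=
  (mem_box hq).2 fun i => Nat.mod_lt _ hq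

theorem modq_le (q : ℕ) (m : Fin n →₀ ℕ) : modq q m ≤ m :=
  Finsupp.le_def.2 fun i => Nat.mod_le _ _

theorem sub_modq (q : ℕ) (m : Fin n →₀ ℕ) : m - modq q m = q • divq q m := by
  ext i
  rw [Finsupp.tsub_apply, Finsupp.smul_apply, modq_apply, divq_apply, smul_eq_mul]
  have := Nat.div_add_mod (m i) q
  omega

theorem smul_divq_add_modq (q : ℕ) (m : Fin n →₀ ℕ) : q • divq q m + modq q m = m := by
  ext i
  rw [Finsupp.add_apply, Finsupp.smul_apply, modq_apply, divq_apply, smul_eq_mul]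
  have := Nat.div_add_mod (m i) q
  omega

theorem eq_modq {q : ℕ} {b m : Fin n →₀ ℕ} (hb : ∀ i, b i < q) (hbm : b ≤ m)
    (h : ∃ m', m - b = q • m') : b = modq q m := by
  obtain ⟨m', hm'⟩ := h
  ext i
  have h1 : m i - b i = q * m' i := by
    have := congrArg (fun v => v i) hm'
    simpa [Finsupp.tsub_apply, Finsupp.smul_apply] using this
  have h2 : b i ≤ m i := Finsupp.le_def.1 hbm i
  have h3 : b i < q := hb i
  rw [modq_apply]
  have h5 : m i = q * m' i + b i := by omega
  rw [h5, Nat.mul_add_mod, Nat.mod_eq_of_lt h3]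

/-- Frobenius decomposition of a power series. -/
theorem decomp (e : ℕ) (f : MvPowerSeries (Fin n) k) :
    f = ∑ b ∈ box (p ^ e) n,
      (Cb p e b f) ^ (p ^ e) * MvPowerSeries.monomial b 1 := by
  have hq : 0 < p ^ e := pow_pos (Fact.out (p := p.Prime)).pos e
  ext m
  rw [map_sum]
  rw [Finset.sum_eq_single (modq (p ^ e) m)]
  · rw [MvPowerSeries.coeff_mul_monomial, if_pos (modq_le _ m), sub_modq, coeff_pow_q,
      coeff_Cb, smul_divq_add_modq, rt_pow, mul_one]
  · intro b hb hne
    rw [MvPowerSeries.coeff_mul_monomial]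
    split_ifs with hbm
    · rw [coeff_pow_q_ne, zero_mul]
      intro hex
      exact hne (eq_modq (fun i => (mem_box hq).1 hb i) hbm hex)
    · rfl
  · intro h
    exact absurd (modq_mem_box hq m) h

end Stmt17

namespace Stmt17

variable {k : Type*} [Field k] (p : ℕ) [Fact p.Prime] [CharP k p] [PerfectRing k p] {n : ℕ}

theorem Cb_mul_pow (e : ℕ) (b : Fin n →₀ ℕ) (hb : ∀ i, b i < p ^ e)
    (g h : MvPowerSeries (Fin n) k) :
    Cb p e b (g ^ p ^ e * h) = g * Cb p e b h := by
  classical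
  have hq : 0 < p ^ e := pow_pos (Fact.out (p := p.Prime)).pos e
  ext m
  rw [coeff_Cb, MvPowerSeries.coeff_mul, map_sum, MvPowerSeries.coeff_mul]
  set φmap : (Fin n →₀ ℕ) × (Fin n →₀ ℕ) → (Fin n →₀ ℕ) × (Fin n →₀ ℕ) :=
    fun x => (p ^ e • x.1, p ^ e • x.2 + b) with hφmap
  have hsub : (Finset.HasAntidiagonal.antidiagonal m).image φmap ⊆ Finset.HasAntidiagonal.antidiagonal (p ^ e • m + b) := by
    intro uv huv
    rw [Finset.mem_image] at huv
    obtain ⟨⟨x, y⟩, hxy, rfl⟩ := huv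
    rw [Finset.HasAntidiagonal.mem_antidiagonal] at hxy ⊢
    rw [hφmap]
    simp only
    rw [← add_assoc, ← smul_add, hxy]
  have hvanish : ∀ uv ∈ Finset.HasAntidiagonal.antidiagonal (p ^ e • m + b),
      uv ∉ (Finset.HasAntidiagonal.antidiagonal m).image φmap →
      rt p e (MvPowerSeries.coeff uv.1 (g ^ p ^ e) * MvPowerSeries.coeff uv.2 h) = 0 := by
    rintro ⟨u, v⟩ huv hnot
    by_cases hdvd : ∃ u', u = p ^ e • u'
    · obtain ⟨u', rfl⟩ := hdvd
      exfalso
      apply hnot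
      rw [Finset.HasAntidiagonal.mem_antidiagonal] at huv
      have hle : u' ≤ m := by
        intro i
        have h1 : p ^ e * u' i + v i = p ^ e * m i + b i := by
          have := congrArg (fun w => w i) huv
          simpa [Finsupp.add_apply, Finsupp.smul_apply] using this
        by_contra hgt
        push_neg at hgt
        have : p ^ e * (m i + 1) ≤ p ^ e * u' i := Nat.mul_le_mul_left _ hgt
        have hb' : b i < p ^ e := hb i
        nlinarith [this, h1, hb']
      rw [Finset.mem_image]
      refine ⟨(u', m - u'), ?_, ?_⟩
      · rw [Finset.HasAntidiagonal.mem_antidiagonal]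
        ext i
        have := Finsupp.le_def.1 hle i
        simp only [Finsupp.add_apply, Finsupp.tsub_apply]
        omega
      · refine Prod.ext rfl ?_
        show p ^ e • (m - u') + b = v
        ext i
        have h1 : p ^ e * u' i + v i = p ^ e * m i + b i := by
          have := congrArg (fun w => w i) huv
          simpa [Finsupp.add_apply, Finsupp.smul_apply] using this
        have h2 : u' i ≤ m i := Finsupp.le_def.1 hle i
        have h3 : p ^ e * (m i - u' i) + p ^ e * u' i = p ^ e * m i := by
          rw [← Nat.mul_add]
          congr 1
          omega
        simp only [Finsupp.add_apply, Finsupp.smul_apply, Finsupp.tsub_apply, smul_eq_mul]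
        omega
    · rw [coeff_pow_q_ne p e g u hdvd, zero_mul, map_zero]
  rw [← Finset.sum_subset hsub hvanish, Finset.sum_image ?inj]
  case inj =>
    intro x _ y _ hxy
    rw [hφmap] at hxy
    simp only [Prod.mk.injEq, add_left_inj] at hxy
    obtain ⟨h1, h2⟩ := hxy
    have hinj : Function.Injective fun w : Fin n →₀ ℕ => p ^ e • w := by
      intro a a' ha
      ext i
      have := congrArg (fun w => w i) ha
      simp only [Finsupp.smul_apply, smul_eq_mul] at this
      exact Nat.eq_of_mul_eq_mul_left hq this
    exact Prod.ext (hinj h1) (hinj h2)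
  refine Finset.sum_congr rfl fun x hx => ?_
  rw [hφmap]
  simp only
  rw [map_mul, coeff_pow_q, rt_pow', coeff_Cb]

end Stmt17

namespace Stmt17

variable {k : Type*} [Field k] (p : ℕ) [Fact p.Prime] [CharP k p] [PerfectRing k p] {n : ℕ}

theorem mem_frobeniusPower_iff (e : ℕ) (P : Ideal (MvPowerSeries (Fin n) k))
    (g : MvPowerSeries (Fin n) k) :
    g ∈ frobeniusPower P (p ^ e) ↔ ∀ b ∈ box (p ^ e) n, Cb p e b g ∈ P := by
  have hq : 0 < p ^ e := pow_pos (Fact.out (p := p.Prime)).pos e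
  constructor
  · intro hg
    have main : ∀ r : MvPowerSeries (Fin n) k, ∀ b ∈ box (p ^ e) n, Cb p e b (r * g) ∈ P := by
      refine Submodule.span_induction ?_ ?_ ?_ ?_ hg
      · rintro x ⟨a, ha, rfl⟩ r b hb
        rw [show r * a ^ p ^ e = a ^ p ^ e * r from mul_comm _ _,
          Cb_mul_pow p e b (fun i => (mem_box hq).1 hb i)]
        exact Ideal.mul_mem_right _ _ ha
      · intro r b hb
        rw [mul_zero, Cb_zero]
        exact zero_mem _
      · intro x y hx hy ihx ihy r b hb
        rw [mul_add, Cb_add]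
        exact add_mem (ihx r b hb) (ihy r b hb)
      · intro a x hx ihx r b hb
        rw [smul_eq_mul, ← mul_assoc]
        exact ihx (r * a) b hb
    intro b hb
    have := main 1 b hb
    rwa [one_mul] at this
  · intro hC
    rw [decomp p e g]
    refine Submodule.sum_mem _ fun b hb => ?_
    refine Ideal.mul_mem_right _ _ ?_
    exact Ideal.subset_span ⟨Cb p e b g, hC b hb, rfl⟩

theorem prod_X_eq_monomial (s : Finset (Fin n)) :
    (∏ i ∈ s, (MvPowerSeries.X i : MvPowerSeries (Fin n) k)) =
      MvPowerSeries.monomial (∑ i ∈ s, Finsupp.single i 1) 1 := by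
  classical
  induction s using Finset.induction_on with
  | empty => simp [MvPowerSeries.monomial_zero_one]
  | insert _ _ hnot ih =>
    rw [Finset.prod_insert hnot, Finset.sum_insert hnot, ih, MvPowerSeries.X,
      MvPowerSeries.monomial_mul_monomial, one_mul]

theorem monomial_one_pow (c : Fin n →₀ ℕ) (t : ℕ) :
    (MvPowerSeries.monomial c (1 : k)) ^ t = MvPowerSeries.monomial (t • c) 1 := by
  induction t with
  | zero => simp [MvPowerSeries.monomial_zero_one]
  | succ t ih =>
    rw [pow_succ, ih, MvPowerSeries.monomial_mul_monomial, one_mul, succ_nsmul]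

theorem prod_X_pow_eq (t : ℕ) :
    (∏ i : Fin n, (MvPowerSeries.X i : MvPowerSeries (Fin n) k)) ^ t =
      MvPowerSeries.monomial (t • ones n) 1 := by
  have hsum : (∑ i : Fin n, Finsupp.single i (1 : ℕ)) = ones n := by
    ext j
    rw [Finsupp.finset_sum_apply,
      Finset.sum_eq_single j (fun i _ hne => Finsupp.single_eq_of_ne' hne) (by simp)]
    simp
  rw [prod_X_eq_monomial, hsum, monomial_one_pow]

end Stmt17

namespace Stmt17

variable {k : Type*} [Field k] (p : ℕ) [Fact p.Prime] [CharP k p] [PerfectRing k p] {n : ℕ}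

noncomputable def bmap (q : ℕ) (b' : Fin n →₀ ℕ) : Fin n →₀ ℕ :=
  Finsupp.equivFunOnFinite.symm fun i => if b' i = 0 then q - 1 else b' i - 1

noncomputable def eps (b' : Fin n →₀ ℕ) : Fin n →₀ ℕ :=
  Finsupp.equivFunOnFinite.symm fun i => if b' i = 0 then 0 else 1

@[simp] theorem bmap_apply (q : ℕ) (b' : Fin n →₀ ℕ) (i : Fin n) :
    bmap q b' i = if b' i = 0 then q - 1 else b' i - 1 := rfl

@[simp] theorem eps_apply (b' : Fin n →₀ ℕ) (i : Fin n) :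
    eps b' i = if b' i = 0 then 0 else 1 := rfl

theorem bmap_mem_box {q : ℕ} (hq : 2 ≤ q) {b' : Fin n →₀ ℕ} (hb' : ∀ i, b' i < q) :
    bmap q b' ∈ box q n := by
  refine (mem_box (by omega)).2 fun i => ?_
  rw [bmap_apply]
  have := hb' i
  split_ifs <;> omega

theorem Cb_shift (e : ℕ) (hq2 : 2 ≤ p ^ e) (b' : Fin n →₀ ℕ) (hb' : ∀ i, b' i < p ^ e)
    (f : MvPowerSeries (Fin n) k) :
    Cb p e (bmap (p ^ e) b')
        (MvPowerSeries.monomial ((p ^ e - 1) • ones n) 1 * f) =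
      MvPowerSeries.monomial (eps b') 1 * Cb p e b' f := by
  ext m
  rw [coeff_Cb, MvPowerSeries.coeff_monomial_mul, MvPowerSeries.coeff_monomial_mul]
  have hcond : ((p ^ e - 1) • ones n ≤ p ^ e • m + bmap (p ^ e) b') ↔ (eps b' ≤ m) := by
    rw [Finsupp.le_def, Finsupp.le_def]
    apply forall_congr'
    intro i
    simp only [Finsupp.smul_apply, Finsupp.add_apply, ones_apply, smul_eq_mul, mul_one,
      bmap_apply, eps_apply]
    have h1 := hb' i
    rcases Nat.eq_zero_or_pos (b' i) with h | h
    · rw [if_pos h, if_pos h]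
      omega
    · rw [if_neg (by omega), if_neg (by omega)]
      rcases Nat.eq_zero_or_pos (m i) with hm | hm
      · have hz : p ^ e * m i = 0 := by rw [hm, mul_zero]
        omega
      · have : p ^ e * 1 ≤ p ^ e * m i := Nat.mul_le_mul_left _ hm
        omega
  by_cases hle : eps b' ≤ m
  · have hAB : p ^ e • m + bmap (p ^ e) b' - (p ^ e - 1) • ones n
        = p ^ e • (m - eps b') + b' := by
      ext i
      have h1 := hb' i
      have h2 : eps b' i ≤ m i := Finsupp.le_def.1 hle i
      simp only [Finsupp.tsub_apply, Finsupp.add_apply, Finsupp.smul_apply, ones_apply,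
        smul_eq_mul, mul_one, bmap_apply, eps_apply] at h2 ⊢
      rcases Nat.eq_zero_or_pos (b' i) with h | h
      · rw [if_pos h] at h2 ⊢
        rw [h, if_pos (rfl : (0:ℕ) = 0), Nat.sub_zero]
        omega
      · rw [if_neg (by omega)] at h2 ⊢
        rw [if_neg (by omega)]
        have hm : 1 ≤ m i := by omega
        have hmul : p ^ e * m i = p ^ e * (m i - 1) + p ^ e := by
          rw [← Nat.mul_succ]
          congr 1
          omega
        omega
    rw [if_pos (hcond.2 hle), if_pos hle, one_mul, one_mul, coeff_Cb, hAB]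
  · rw [if_neg (fun hc => hle (hcond.1 hc)), if_neg hle, map_zero]

end Stmt17

namespace Stmt17

variable {k : Type*} [Field k] (p : ℕ) [Fact p.Prime] [CharP k p] [PerfectRing k p] {n : ℕ}

theorem monomial_eps_eq_prod (b' : Fin n →₀ ℕ) :
    MvPowerSeries.monomial (eps b') 1 =
      ∏ i ∈ b'.support, (MvPowerSeries.X i : MvPowerSeries (Fin n) k) := by
  have hsum : (∑ i ∈ b'.support, Finsupp.single i (1 : ℕ)) = eps b' := by
    ext j
    rw [Finsupp.finset_sum_apply, eps_apply]
    by_cases h : b' j = 0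
    · rw [if_pos h, Finset.sum_eq_zero]
      intro i hi
      rw [Finsupp.single_apply, if_neg]
      rintro rfl
      exact (Finsupp.mem_support_iff.1 hi) h
    · rw [if_neg h, Finset.sum_eq_single j (fun i _ hne => Finsupp.single_eq_of_ne' hne)
        (fun hnot => absurd (Finsupp.mem_support_iff.2 h) hnot), Finsupp.single_eq_same]
  rw [prod_X_eq_monomial, hsum]

theorem no_unit_mem {P : Ideal (MvPowerSeries (Fin n) k)} (hP : P.IsPrime)
    {f : MvPowerSeries (Fin n) k} (hf : f ∈ P)
    (hc : MvPowerSeries.constantCoeff (σ := Fin n) (R := k) f ≠ 0) : False := by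
  have : IsUnit f := MvPowerSeries.isUnit_iff_constantCoeff.2 (isUnit_iff_ne_zero.2 hc)
  exact hP.ne_top (P.eq_top_of_isUnit_mem hf this)

theorem main_vanish (e : ℕ) (he : 1 ≤ e) (P : Ideal (MvPowerSeries (Fin n) k)) (hP : P.IsPrime)
    (hcomp : ∀ f ∈ P, MvPowerSeries.monomial ((p ^ e - 1) • ones n) 1 * f ∈
      frobeniusPower P (p ^ e)) :
    ∀ N : ℕ, ∀ m : Fin n →₀ ℕ, (∑ i, m i) = N → ∀ f ∈ P,
      (∀ i, MvPowerSeries.X i ∈ P → m i = 0) → MvPowerSeries.coeff m f = 0 := by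
  have hp2 : 2 ≤ p := (Fact.out (p := p.Prime)).two_le
  have hq : 0 < p ^ e := pow_pos (by omega) e
  intro N
  induction N using Nat.strong_induction_on with
  | _ N ih =>
    intro m hmN f hf havoid
    by_contra hne
    rcases Nat.eq_zero_or_pos N with hN0 | hN1
    · -- m = 0, constant term nonzero
      have hm0 : m = 0 := by
        ext i
        have : ∀ j, m j = 0 := by
          intro j
          have h1 : m j ≤ ∑ i, m i := Finset.single_le_sum (fun _ _ => Nat.zero_le _)
            (Finset.mem_univ j)
          omega
        simp [this]
      refine no_unit_mem hP hf ?_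
      rw [← MvPowerSeries.coeff_zero_eq_constantCoeff_apply, ← hm0]
      exact hne
    -- main case
    have hq2 : 2 ≤ p ^ e := le_trans hp2 (Nat.le_self_pow (by omega) p)
    set b' := modq (p ^ e) m with hb'def
    set m' := divq (p ^ e) m with hm'def
    have hb' : ∀ i, b' i < p ^ e := fun i => Nat.mod_lt _ hq
    have hz := hcomp f hf
    have step1 : Cb p e (bmap (p ^ e) b')
        (MvPowerSeries.monomial ((p ^ e - 1) • ones n) 1 * f) ∈ P :=
      (mem_frobeniusPower_iff p e P _).1 hz _ (bmap_mem_box hq2 hb')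
    rw [Cb_shift p e hq2 b' hb' f] at step1
    have step3 : MvPowerSeries.monomial (eps b') (1 : k) ∉ P := by
      rw [monomial_eps_eq_prod]
      intro hmem
      obtain ⟨i, hi, hXi⟩ := (Ideal.IsPrime.prod_mem_iff (hp := hP)).1 hmem
      rw [Finsupp.mem_support_iff] at hi
      have hm0 := havoid i hXi
      simp only [hb'def, modq_apply, hm0, Nat.zero_mod] at hi
      exact hi rfl
    have step4 : Cb p e b' f ∈ P := ((hP.mem_or_mem step1).resolve_left step3)
    have step5 : MvPowerSeries.coeff m' (Cb p e b' f) ≠ 0 := by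
      rw [coeff_Cb, hm'def, hb'def, smul_divq_add_modq]
      intro h
      exact hne ((rt_eq_zero_iff p e).1 h)
    have step6 : ∀ i, MvPowerSeries.X i ∈ P → m' i = 0 := by
      intro i hXi
      have := havoid i hXi
      rw [hm'def]
      simp only [divq_apply, this]
      exact Nat.zero_div _
    have hlt : (∑ i, m' i) < N := by
      have hle : ∀ i, 2 * m' i ≤ m i := by
        intro i
        rw [hm'def, divq_apply]
        have h1 : p ^ e * (m i / p ^ e) ≤ m i := Nat.mul_div_le _ _
        have h2 : 2 * (m i / p ^ e) ≤ p ^ e * (m i / p ^ e) :=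
          Nat.mul_le_mul_right _ hq2
        omega
      have : 2 * (∑ i, m' i) ≤ ∑ i, m i := by
        rw [Finset.mul_sum]
        exact Finset.sum_le_sum fun i _ => hle i
      omega
    exact step5 (ih _ hlt m' rfl _ step4 step6)

end Stmt17

namespace Stmt17

variable {k : Type*} [Field k] (p : ℕ) [Fact p.Prime] [CharP k p] [PerfectRing k p] {n : ℕ}

theorem mem_span_vars (A : Finset (Fin n)) (f : MvPowerSeries (Fin n) k)
    (h : ∀ m : Fin n →₀ ℕ, (∀ i ∈ A, m i = 0) → MvPowerSeries.coeff m f = 0) :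
    f ∈ Ideal.span ((fun i => (MvPowerSeries.X i : MvPowerSeries (Fin n) k)) ''
      (A : Set (Fin n))) := by
  classical
  set T : (Fin n →₀ ℕ) → Finset (Fin n) := fun m => A.filter (fun j => m j ≠ 0) with hT
  set g : Fin n → MvPowerSeries (Fin n) k := fun i =>
    fun m => if (T m).min = (i : WithTop (Fin n)) then MvPowerSeries.coeff m f else 0
      with hgdef
  have hg : ∀ i m, MvPowerSeries.coeff m (g i)
      = if (T m).min = (i : WithTop (Fin n)) then MvPowerSeries.coeff m f else 0 :=
    fun i m => rfl
  have hfg : f = ∑ i ∈ A, g i := by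
    ext m
    rw [map_sum]
    by_cases hTm : (T m).Nonempty
    · set i0 := (T m).min' hTm with hi0
      have hmin : (T m).min = (i0 : WithTop (Fin n)) := (Finset.coe_min' hTm).symm
      have hi0A : i0 ∈ A := (Finset.mem_filter.1 ((T m).min'_mem hTm)).1
      rw [Finset.sum_eq_single i0 ?other ?notmem]
      · rw [hg, if_pos hmin]
      case other =>
        intro i _ hne
        rw [hg, hmin, if_neg]
        exact fun hc => hne (WithTop.coe_inj.1 hc).symm
      case notmem =>
        intro hnot
        exact absurd hi0A hnot
    · have hzero : MvPowerSeries.coeff m f = 0 := by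
        apply h
        intro i hi
        by_contra hmi
        exact hTm ⟨i, Finset.mem_filter.2 ⟨hi, hmi⟩⟩
      rw [hzero, Finset.sum_eq_zero]
      intro i _
      rw [hg, if_neg]
      rw [Finset.not_nonempty_iff_eq_empty.1 hTm, Finset.min_empty]
      exact fun hc => WithTop.top_ne_coe hc
  rw [hfg]
  refine Submodule.sum_mem _ fun i hi => ?_
  have hdvd : MvPowerSeries.X i ∣ g i := by
    rw [MvPowerSeries.X_dvd_iff]
    intro m hmi
    rw [hg]
    split_ifs with hmin
    · exfalso
      have hi' : i ∈ T m := Finset.mem_of_min hmin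
      exact (Finset.mem_filter.1 hi').2 hmi
    · rfl
  obtain ⟨c, hc⟩ := hdvd
  rw [hc]
  exact Ideal.mul_mem_right _ _ (Ideal.subset_span ⟨i, Finset.mem_coe.2 hi, rfl⟩)

theorem backward (e : ℕ) (A : Finset (Fin n)) (f : MvPowerSeries (Fin n) k)
    (hf : f ∈ Ideal.span ((fun i => (MvPowerSeries.X i : MvPowerSeries (Fin n) k)) ''
      (A : Set (Fin n)))) :
    (∏ i : Fin n, (MvPowerSeries.X i : MvPowerSeries (Fin n) k)) ^ (p ^ e - 1) * f ∈
      frobeniusPower (Ideal.span ((fun i => (MvPowerSeries.X i : MvPowerSeries (Fin n) k)) ''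
        (A : Set (Fin n)))) (p ^ e) := by
  classical
  have hq : 0 < p ^ e := pow_pos (Fact.out (p := p.Prime)).pos e
  refine Submodule.span_induction ?_ ?_ ?_ ?_ hf
  · rintro x ⟨i, hi, rfl⟩
    have key : (∏ j : Fin n, (MvPowerSeries.X j : MvPowerSeries (Fin n) k)) ^ (p ^ e - 1)
        * MvPowerSeries.X i =
        (∏ j ∈ Finset.univ.erase i, (MvPowerSeries.X j : MvPowerSeries (Fin n) k) ^ (p ^ e - 1))
          * MvPowerSeries.X i ^ (p ^ e) := by
      rw [← Finset.prod_pow]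
      rw [← Finset.prod_erase_mul (Finset.univ) _ (Finset.mem_univ i)]
      rw [mul_assoc, ← pow_succ]
      congr 2
      omega
    rw [key]
    refine Ideal.mul_mem_left _ _ ?_
    refine Ideal.subset_span ⟨MvPowerSeries.X i, ?_, rfl⟩
    exact Ideal.subset_span ⟨i, hi, rfl⟩
  · rw [mul_zero]
    exact zero_mem _
  · intro x y _ _ ihx ihy
    rw [mul_add]
    exact add_mem ihx ihy
  · intro a x _ ihx
    rw [smul_eq_mul, show (∏ i : Fin n, (MvPowerSeries.X i : MvPowerSeries (Fin n) k))
      ^ (p ^ e - 1) * (a * x) = a * ((∏ i : Fin n, (MvPowerSeries.X i :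
        MvPowerSeries (Fin n) k)) ^ (p ^ e - 1) * x) from by ring]
    exact Ideal.mul_mem_left _ _ ihx

end Stmt17


open Stmt17 in
/-- For `z = (x₁⋯xₙ)^{q−1}` in `S = k[[x₁,…,xₙ]]`, a prime ideal `P`
satisfies `z·P ⊆ P^{[q]}` iff `P` is generated by a (possibly empty) subset of the
variables. -/
theorem compatible_primes_are_generated_by_variables {k : Type*} [Field k] (p : ℕ)
    [Fact p.Prime] [CharP k p] [PerfectRing k p] (n : ℕ) (e q : ℕ) (he : 1 ≤ e)
    (hq : q = p ^ e)
    (P : Ideal (MvPowerSeries (Fin n) k)) (hP : P.IsPrime) :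
    (∀ f ∈ P,
        (∏ i : Fin n, (MvPowerSeries.X i : MvPowerSeries (Fin n) k)) ^ (q - 1) * f ∈
          frobeniusPower P q) ↔
      ∃ A : Finset (Fin n),
        P = Ideal.span ((fun i => (MvPowerSeries.X i : MvPowerSeries (Fin n) k)) ''
          (A : Set (Fin n))) := by
  subst hq
  have hzeq : (∏ i : Fin n, (MvPowerSeries.X i : MvPowerSeries (Fin n) k)) ^ (p ^ e - 1)
      = MvPowerSeries.monomial ((p ^ e - 1) • ones n) 1 := prod_X_pow_eq _
  constructor
  · intro hcomp
    classical
    set A : Finset (Fin n) :=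
      Finset.univ.filter (fun i => (MvPowerSeries.X i : MvPowerSeries (Fin n) k) ∈ P) with hA
    refine ⟨A, le_antisymm ?_ ?_⟩
    · intro f hf
      apply mem_span_vars
      intro m hm
      refine main_vanish p e he P hP ?_ (∑ i, m i) m rfl f hf ?_
      · intro f' hf'
        have := hcomp f' hf'
        rwa [hzeq] at this
      · intro i hXi
        exact hm i (Finset.mem_filter.2 ⟨Finset.mem_univ i, hXi⟩)
    · rw [Ideal.span_le]
      rintro x ⟨i, hi, rfl⟩
      exact (Finset.mem_filter.1 (Finset.mem_coe.1 hi)).2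
  · rintro ⟨A, rfl⟩ f hf
    exact backward p e A f hf
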